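/- Let I, U : ℝ → ℝ be twice continuously differentiable on an open interval containing q*, with I(q) > 0 and I'(q) > 0 on this interval, and set 𝓔(H, q) = H²/(2 I(q)) + U(q). Suppose h is differentiable on a neighborhood of q* with h(q*) = H* > 0 and ∂𝓔/∂q(h(q), q) = 0 for all q in this neighborhood. Then ∂²𝓔/∂q²(H*, q*) = (H* I'(q*)/I(q*)²) · h'(q*); in particular, ∂²𝓔/∂q²(H*, q*) has the same sign as h'(q*). -/

import Mathlib

/-- Lemma relating the stability of a one-degree-of-freedom relative equilibrium
to how its angular momentum varies along the family: if `𝓔(H,q) = H²/(2 I q) + U q`,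
`I, I' > 0`, and `q ↦ h q` parameterizes the family of relative equilibria
(`∂𝓔/∂q(h q, q) = 0` near `q*`, `h q* = H* > 0`), then
`∂²𝓔/∂q²(H*, q*) = (H* I'(q*)/I(q*)²) · h'(q*)`; in particular the second
partial has the same sign as `h'(q*)`. -/
theorem stability_sign_equals_dH_dq
    (I U h : ℝ → ℝ) (qstar Hstar a b : ℝ)
    (hmem : qstar ∈ Set.Ioo a b)
    (hI : ContDiffOn ℝ 2 I (Set.Ioo a b)) (hU : ContDiffOn ℝ 2 U (Set.Ioo a b))
    (hIpos : ∀ q ∈ Set.Ioo a b, 0 < I q)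
    (hI'pos : ∀ q ∈ Set.Ioo a b, 0 < deriv I q)
    (hHstar : 0 < Hstar) (hhq : h qstar = Hstar)
    (hhdiff : ∀ᶠ q in nhds qstar, DifferentiableAt ℝ h q)
    (hequil : ∀ᶠ q in nhds qstar,
      deriv (fun x => (h q) ^ 2 / (2 * I x) + U x) q = 0) :
    deriv (deriv (fun x => Hstar ^ 2 / (2 * I x) + U x)) qstar
        = (Hstar * deriv I qstar / (I qstar) ^ 2) * deriv h qstar ∧
      Real.sign (deriv (deriv (fun x => Hstar ^ 2 / (2 * I x) + U x)) qstar)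
        = Real.sign (deriv h qstar) := by
  have hsopen : IsOpen (Set.Ioo a b) := isOpen_Ioo
  have hsnhds : Set.Ioo a b ∈ nhds qstar := hsopen.mem_nhds hmem
  have hIdiff : ∀ q ∈ Set.Ioo a b, DifferentiableAt ℝ I q := fun q hq =>
    (hI.differentiableOn (by norm_num)).differentiableAt (hsopen.mem_nhds hq)
  have hUdiff : ∀ q ∈ Set.Ioo a b, DifferentiableAt ℝ U q := fun q hq =>
    (hU.differentiableOn (by norm_num)).differentiableAt (hsopen.mem_nhds hq)
  have hI'cd : ContDiffOn ℝ 1 (deriv I) (Set.Ioo a b) :=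
    hI.deriv_of_isOpen hsopen (by norm_num)
  have hU'cd : ContDiffOn ℝ 1 (deriv U) (Set.Ioo a b) :=
    hU.deriv_of_isOpen hsopen (by norm_num)
  have hI'diff : DifferentiableAt ℝ (deriv I) qstar :=
    (hI'cd.differentiableOn (by norm_num)).differentiableAt hsnhds
  have hU'diff : DifferentiableAt ℝ (deriv U) qstar :=
    (hU'cd.differentiableOn (by norm_num)).differentiableAt hsnhds
  have key : ∀ c : ℝ, ∀ q ∈ Set.Ioo a b,
      deriv (fun x => c / (2 * I x) + U x) q
        = -(c * deriv I q) / (2 * (I q) ^ 2) + deriv U q := by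
    intro c q hq
    have hIq := hIpos q hq
    have h1 : HasDerivAt I (deriv I q) q := (hIdiff q hq).hasDerivAt
    have h2 : HasDerivAt U (deriv U q) q := (hUdiff q hq).hasDerivAt
    have hne : 2 * I q ≠ 0 := by positivity
    have h3 : HasDerivAt (fun x => (2 : ℝ) * I x) (2 * deriv I q) q := h1.const_mul 2
    have h4 : HasDerivAt (fun x => c / (2 * I x))
        ((0 * (2 * I q) - c * (2 * deriv I q)) / (2 * I q) ^ 2) q :=
      (hasDerivAt_const q c).div h3 hne
    rw [show deriv (fun x => c / (2 * I x) + U x) q = _ from (h4.add h2).deriv]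
    have : I q ≠ 0 := hIq.ne'
    field_simp
    ring
  have hequil' : ∀ᶠ q in nhds qstar,
      deriv U q = h q ^ 2 * deriv I q / (2 * (I q) ^ 2) := by
    filter_upwards [hequil, hsnhds] with q he hq
    have hk := key (h q ^ 2) q hq
    rw [he] at hk
    have hIq := (hIpos q hq).ne'
    field_simp at hk ⊢
    linarith
  have hfg : deriv (fun x => Hstar ^ 2 / (2 * I x) + U x) =ᶠ[nhds qstar]
      fun q => (h q ^ 2 - Hstar ^ 2) * (deriv I q / (2 * (I q) ^ 2)) := by
    filter_upwards [hequil', hsnhds] with q he hq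
    rw [key (Hstar ^ 2) q hq, he]
    have : I q ≠ 0 := (hIpos q hq).ne'
    field_simp
    ring
  have hd2 : deriv (deriv (fun x => Hstar ^ 2 / (2 * I x) + U x)) qstar
      = deriv (fun q => (h q ^ 2 - Hstar ^ 2) * (deriv I q / (2 * (I q) ^ 2))) qstar :=
    hfg.deriv_eq
  have hhstar : DifferentiableAt ℝ h qstar := hhdiff.self_of_nhds
  have hIq := hIpos qstar hmem
  have hIdq : DifferentiableAt ℝ I qstar := hIdiff qstar hmem
  have hu : HasDerivAt (fun q => h q ^ 2 - Hstar ^ 2) (2 * h qstar * deriv h qstar) qstar := by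
    have := ((hhstar.hasDerivAt.pow 2).sub_const (Hstar ^ 2))
    simpa [mul_comm, mul_assoc] using this
  have hvdiff : DifferentiableAt ℝ (fun q => deriv I q / (2 * (I q) ^ 2)) qstar := by
    apply hI'diff.div ((hIdq.pow 2).const_mul 2)
    exact mul_ne_zero two_ne_zero (pow_ne_zero 2 hIq.ne')
  have hmul : deriv (fun q => (h q ^ 2 - Hstar ^ 2) * (deriv I q / (2 * (I q) ^ 2))) qstar
      = deriv (fun q => h q ^ 2 - Hstar ^ 2) qstar * (deriv I qstar / (2 * (I qstar) ^ 2))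
        + (h qstar ^ 2 - Hstar ^ 2) * deriv (fun q => deriv I q / (2 * (I q) ^ 2)) qstar :=
    deriv_mul hu.differentiableAt hvdiff
  have main : deriv (deriv (fun x => Hstar ^ 2 / (2 * I x) + U x)) qstar
      = (Hstar * deriv I qstar / (I qstar) ^ 2) * deriv h qstar := by
    rw [hd2, hmul, hu.deriv, hhq]
    have : I qstar ≠ 0 := hIq.ne'
    field_simp
    ring
  refine ⟨main, ?_⟩
  rw [main]
  have hc : 0 < Hstar * deriv I qstar / (I qstar) ^ 2 := by
    have := hI'pos qstar hmem
    positivity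
  rcases lt_trichotomy (deriv h qstar) 0 with hx | hx | hx
  · rw [Real.sign_of_neg hx, Real.sign_of_neg (mul_neg_of_pos_of_neg hc hx)]
  · rw [hx, mul_zero]
  · rw [Real.sign_of_pos hx, Real.sign_of_pos (mul_pos hc hx)]
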